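/- arXiv:1509.07294 — 4 statements merged into one kernel-verified Lean document; each statement's English description precedes it below -/
import Mathlib

section
/- Let f be a positive semidefinite matrix in M_n(ℂ) with normalized trace τ(f) = (1/n) tr(f) = 1. Then the function g(p) = ‖f‖_p = (τ(f^p))^{1/p} (defined for p ≥ 1 using the normalized trace) is differentiable at p = 1 with g'(1) = τ(f log f). -/
open scoped BigOperators ComplexOrder

/-- For a positive semidefinite `f ∈ M_n(ℂ)` with normalized trace
`τ(f) = tr(f)/n = 1`, the function `g(p) = ‖f‖_p = (τ(f^p))^{1/p}` (Schatten p-norm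
with respect to the normalized trace, computed spectrally) is differentiable at
`p = 1` with `g'(1) = τ(f log f)`. -/
theorem schattenNorm_hasDerivAt_one {n : ℕ} [NeZero n]
    (f : Matrix (Fin n) (Fin n) ℂ) (hf : f.PosSemidef)
    (htr : f.trace = (n : ℂ)) :
    HasDerivAt
      (fun p : ℝ => ((1 / (n : ℝ)) * ∑ i, hf.1.eigenvalues i ^ p) ^ (1 / p))
      ((1 / (n : ℝ)) * ∑ i, hf.1.eigenvalues i * Real.log (hf.1.eigenvalues i))
      1 := by
  set μ := hf.1.eigenvalues with hμ
  have hnn : ∀ i, 0 ≤ μ i := hf.eigenvalues_nonneg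
  have hn : (n : ℝ) ≠ 0 := Nat.cast_ne_zero.mpr (NeZero.ne n)
  -- sum of eigenvalues = n
  have htrC : f.trace = ∑ i, ((μ i : ℝ) : ℂ) := by
    conv_lhs => rw [hf.1.spectral_theorem]
    rw [Unitary.conjStarAlgAut_apply, Matrix.trace_mul_cycle,
      Unitary.coe_star_mul_self, Matrix.one_mul, Matrix.trace_diagonal]
    rfl
  have hsum : ∑ i, μ i = (n : ℝ) := by
    have : ((∑ i, μ i : ℝ) : ℂ) = ((n : ℝ) : ℂ) := by
      push_cast
      rw [← htrC, htr]
    exact_mod_cast this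
  have hF1 : (1 / (n : ℝ)) * ∑ i, μ i = 1 := by
    rw [hsum]; field_simp
  -- each term differentiable
  have hterm : ∀ i : Fin n, HasDerivAt (fun p : ℝ => μ i ^ p)
      (μ i * Real.log (μ i)) 1 := by
    intro i
    rcases eq_or_lt_of_le (hnn i) with h0 | hpos
    · have hc : HasDerivAt (fun _ : ℝ => (0:ℝ)) 0 1 := hasDerivAt_const _ _
      have he : (fun _ : ℝ => (0:ℝ)) =ᶠ[nhds (1:ℝ)] fun p => μ i ^ p := by
        filter_upwards [eventually_ne_nhds one_ne_zero] with p hp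
        rw [← h0, Real.zero_rpow hp]
      simpa [← h0] using hc.congr_of_eventuallyEq he.symm
    · simpa [Real.rpow_one] using
        (Real.hasStrictDerivAt_const_rpow hpos 1).hasDerivAt
  have hF : HasDerivAt (fun p : ℝ => (1 / (n : ℝ)) * ∑ i, μ i ^ p)
      ((1 / (n : ℝ)) * ∑ i, μ i * Real.log (μ i)) 1 :=
    (HasDerivAt.fun_sum fun i _ => hterm i).const_mul _
  have hg : HasDerivAt (fun p : ℝ => 1 / p) (-1 : ℝ) 1 := by
    have := hasDerivAt_inv (one_ne_zero (α := ℝ))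
    norm_num at this
    simpa [one_div] using this
  have hpos1 : (0:ℝ) < (1 / (n : ℝ)) * ∑ i, μ i ^ (1:ℝ) := by
    simp only [Real.rpow_one, hF1]; norm_num
  rw [one_div] at hF1
  have := hF.rpow hg hpos1
  simpa [Real.rpow_one, hF1] using this
end

section
/- Suppose σ₁ and σ_f are density matrices on a finite-dimensional Hilbert space and f is a positive matrix with ‖f‖_p defined via a normalized trace τ such that τ(f) = 1, and suppose ‖σ₁‖_p ≤ ‖σ_f‖_p ≤ ‖f‖_p · ‖σ₁‖_p holds for all p ∈ [1, ∞). Then H(σ₁) − τ(f log f) ≤ H(σ_f) ≤ H(σ₁). -/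
open scoped BigOperators ComplexOrder

lemma trace_eq_sum_eigs {k : ℕ} {A : Matrix (Fin k) (Fin k) ℂ} (hA : A.IsHermitian) :
    A.trace = ∑ i, (hA.eigenvalues i : ℂ) := by
  conv_lhs => rw [hA.spectral_theorem]
  rw [Unitary.conjStarAlgAut_apply, Matrix.trace_mul_comm, ← Matrix.mul_assoc, Matrix.mem_unitaryGroup_iff'.mp
    (hA.eigenvectorUnitary).2, Matrix.one_mul, Matrix.trace_diagonal]
  simp [Function.comp]

lemma hasDerivAt_sum_rpow {k : ℕ} (x : Fin k → ℝ) (hx : ∀ i, 0 ≤ x i) :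
    HasDerivAt (fun p : ℝ => ∑ i, x i ^ p) (∑ i, x i * Real.log (x i)) 1 := by
  apply HasDerivAt.fun_sum
  intro i _
  rcases eq_or_lt_of_le (hx i) with h | h
  · have : (fun p : ℝ => x i ^ p) =ᶠ[nhds 1] fun _ => 0 := by
      filter_upwards [eventually_gt_nhds (one_pos)] with p hp
      rw [← h, Real.zero_rpow (ne_of_gt hp)]
    have h2 : HasDerivAt (fun p : ℝ => x i ^ p) 0 1 :=
      (hasDerivAt_const (1:ℝ) (0:ℝ)).congr_of_eventuallyEq this
    have h3 : x i * Real.log (x i) = 0 := by rw [← h]; ring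
    rw [h3]; exact h2
  · have := (Real.hasStrictDerivAt_const_rpow h (1:ℝ)).hasDerivAt
    simpa [Real.rpow_one] using this

lemma deriv_nonneg_of_nonneg {g : ℝ → ℝ} {d : ℝ} (h0 : g 1 = 0)
    (hge : ∀ p, 1 ≤ p → 0 ≤ g p) (hd : HasDerivAt g d 1) : 0 ≤ d := by
  have h := (hd.hasDerivWithinAt (s := Set.Ici 1))
  rw [hasDerivWithinAt_iff_tendsto_slope] at h
  have hs : Set.Ici (1:ℝ) \ {1} = Set.Ioi 1 := by
    ext p; simp [Set.mem_diff, lt_iff_le_and_ne, and_comm, eq_comm]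
  rw [hs] at h
  refine ge_of_tendsto h ?_
  filter_upwards [self_mem_nhdsWithin] with p (hp : 1 < p)
  rw [slope_def_field, h0, sub_zero]
  exact div_nonneg (hge p hp.le) (by linarith)

lemma rpow_le_of_rpow_inv_le {X Y : ℝ} {p : ℝ} (hp : 0 < p) (hX : 0 ≤ X) (hY : 0 ≤ Y)
    (h : X ^ (1/p) ≤ Y ^ (1/p)) : X ≤ Y := by
  have := Real.rpow_le_rpow (Real.rpow_nonneg hX _) h hp.le
  rwa [← Real.rpow_mul hX, ← Real.rpow_mul hY, one_div_mul_cancel hp.ne',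
    Real.rpow_one, Real.rpow_one] at this

/-- Suppose `σ₁` and `σ_f` are density matrices, `f` is a positive
matrix with normalized trace `τ(f) = 1`, and the comparison property
`‖σ₁‖_p ≤ ‖σ_f‖_p ≤ ‖f‖_p ‖σ₁‖_p` holds for all `p ∈ [1, ∞)` (Schatten norms
computed spectrally, `‖f‖_p = τ(f^p)^{1/p}` with respect to the normalized trace).
Then `H(σ₁) − τ(f log f) ≤ H(σ_f) ≤ H(σ₁)`. -/
theorem entropy_comparison_of_schatten_comparison {m n : ℕ} [NeZero n]
    (σ₁ σf : Matrix (Fin m) (Fin m) ℂ) (f : Matrix (Fin n) (Fin n) ℂ)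
    (h1 : σ₁.PosSemidef) (hfout : σf.PosSemidef) (hfN : f.PosSemidef)
    (htr1 : σ₁.trace = 1) (htrf : σf.trace = 1)
    (htrN : f.trace = (n : ℂ))
    (hcomp : ∀ p : ℝ, 1 ≤ p →
      (∑ i, h1.1.eigenvalues i ^ p) ^ (1 / p)
          ≤ (∑ i, hfout.1.eigenvalues i ^ p) ^ (1 / p) ∧
      (∑ i, hfout.1.eigenvalues i ^ p) ^ (1 / p)
          ≤ ((1 / (n : ℝ)) * ∑ j, hfN.1.eigenvalues j ^ p) ^ (1 / p) *
              (∑ i, h1.1.eigenvalues i ^ p) ^ (1 / p)) :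
    (∑ i, Real.negMulLog (h1.1.eigenvalues i))
        - (1 / (n : ℝ)) * ∑ j, hfN.1.eigenvalues j * Real.log (hfN.1.eigenvalues j)
      ≤ ∑ i, Real.negMulLog (hfout.1.eigenvalues i) ∧
    (∑ i, Real.negMulLog (hfout.1.eigenvalues i))
      ≤ ∑ i, Real.negMulLog (h1.1.eigenvalues i) := by
  set a : Fin m → ℝ := h1.1.eigenvalues with ha_def
  set b : Fin m → ℝ := hfout.1.eigenvalues with hb_def
  set c : Fin n → ℝ := hfN.1.eigenvalues with hc_def
  have ha : ∀ i, 0 ≤ a i := h1.eigenvalues_nonneg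
  have hb : ∀ i, 0 ≤ b i := hfout.eigenvalues_nonneg
  have hc : ∀ j, 0 ≤ c j := hfN.eigenvalues_nonneg
  have hsa : ∑ i, a i = 1 := by
    have := trace_eq_sum_eigs h1.1
    rw [htr1] at this
    exact_mod_cast this.symm
  have hsb : ∑ i, b i = 1 := by
    have := trace_eq_sum_eigs hfout.1
    rw [htrf] at this
    exact_mod_cast this.symm
  have hsc : ∑ j, c j = (n : ℝ) := by
    have := trace_eq_sum_eigs hfN.1
    rw [htrN] at this
    exact_mod_cast this.symm
  have hn : (0:ℝ) < n := by exact_mod_cast Nat.pos_of_ne_zero (NeZero.ne n)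
  -- the three sum functions
  set A : ℝ → ℝ := fun p => ∑ i, a i ^ p with hA_def
  set B : ℝ → ℝ := fun p => ∑ i, b i ^ p with hB_def
  set C : ℝ → ℝ := fun p => (1 / (n:ℝ)) * ∑ j, c j ^ p with hC_def
  have hApos : ∀ p, 0 ≤ A p := fun p => Finset.sum_nonneg fun i _ => Real.rpow_nonneg (ha i) p
  have hBpos : ∀ p, 0 ≤ B p := fun p => Finset.sum_nonneg fun i _ => Real.rpow_nonneg (hb i) p
  have hCpos : ∀ p, 0 ≤ C p := fun p => mul_nonneg (by positivity)
    (Finset.sum_nonneg fun j _ => Real.rpow_nonneg (hc j) p)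
  have hA1 : A 1 = 1 := by simp only [hA_def, Real.rpow_one]; exact hsa
  have hB1 : B 1 = 1 := by simp only [hB_def, Real.rpow_one]; exact hsb
  have hC1 : C 1 = 1 := by
    simp only [hC_def, Real.rpow_one, hsc]
    field_simp
  -- comparisons without roots
  have hAB : ∀ p, 1 ≤ p → A p ≤ B p := by
    intro p hp
    exact rpow_le_of_rpow_inv_le (lt_of_lt_of_le one_pos hp) (hApos p) (hBpos p)
      (hcomp p hp).1
  have hBCA : ∀ p, 1 ≤ p → B p ≤ C p * A p := by
    intro p hp
    refine rpow_le_of_rpow_inv_le (lt_of_lt_of_le one_pos hp) (hBpos p)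
      (mul_nonneg (hCpos p) (hApos p)) ?_
    rw [Real.mul_rpow (hCpos p) (hApos p)]
    exact (hcomp p hp).2
  -- derivatives at 1
  have dA : HasDerivAt A (∑ i, a i * Real.log (a i)) 1 := hasDerivAt_sum_rpow a ha
  have dB : HasDerivAt B (∑ i, b i * Real.log (b i)) 1 := hasDerivAt_sum_rpow b hb
  have dC : HasDerivAt C ((1 / (n:ℝ)) * ∑ j, c j * Real.log (c j)) 1 :=
    (hasDerivAt_sum_rpow c hc).const_mul _
  set SA := ∑ i, a i * Real.log (a i)
  set SB := ∑ i, b i * Real.log (b i)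
  set SC := (1 / (n:ℝ)) * ∑ j, c j * Real.log (c j)
  have key1 : 0 ≤ SB - SA := by
    refine deriv_nonneg_of_nonneg (g := fun p => B p - A p) ?_ ?_ (dB.sub dA)
    · show B 1 - A 1 = 0
      rw [hA1, hB1]; ring
    · intro p hp; simpa using sub_nonneg.mpr (hAB p hp)
  have key2 : 0 ≤ SC * A 1 + C 1 * SA - SB := by
    refine deriv_nonneg_of_nonneg (g := fun p => C p * A p - B p) ?_ ?_ ((dC.mul dA).sub dB)
    · show C 1 * A 1 - B 1 = 0
      rw [hA1, hB1, hC1]; ring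
    · intro p hp; simpa using sub_nonneg.mpr (hBCA p hp)
  rw [hA1, hC1] at key2
  have hEa : ∑ i, Real.negMulLog (a i) = -SA := by
    simp [Real.negMulLog, SA]
  have hEb : ∑ i, Real.negMulLog (b i) = -SB := by
    simp [Real.negMulLog, SB]
  rw [hEa, hEb]
  constructor <;> linarith
end

section
/- Let M ⊂ M_m(ℂ) be a *-subalgebra containing the identity and B ∈ B(K, ℂ^m) a coisometry (BB* = id_K) for a finite-dimensional Hilbert space K such that MB = {yB : y ∈ M} is a subspace of the Hilbert–Schmidt operators from K to ℂ^m. Then the map P(T) = E_M(TB*)B, where E_M is the trace-preserving conditional expectation onto M, is the orthogonal projection from the Hilbert–Schmidt space HS(K, ℂ^m) onto the subspace MB. -/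
open Matrix
open scoped BigOperators ComplexOrder

lemma trace_mul_conjTranspose_self_eq_zero' {m k : ℕ} {A : Matrix (Fin m) (Fin k) ℂ}
    (h : (A * Aᴴ).trace = 0) : A = 0 := by
  have key : (A * Aᴴ).trace = ((∑ i, ∑ j, Complex.normSq (A i j) : ℝ) : ℂ) := by
    simp only [Matrix.trace, Matrix.diag, Matrix.mul_apply, Matrix.conjTranspose_apply]
    push_cast
    congr 1; ext i; congr 1; ext j
    rw [← Complex.mul_conj]
    rfl
  rw [key] at h
  norm_cast at h
  have h1 := (Finset.sum_eq_zero_iff_of_nonneg (fun i _ => Finset.sum_nonneg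
    (fun j _ => Complex.normSq_nonneg _))).mp h
  ext i j
  have h2 := (Finset.sum_eq_zero_iff_of_nonneg
    (fun j _ => Complex.normSq_nonneg (A i j))).mp (h1 i (Finset.mem_univ i)) j
    (Finset.mem_univ j)
  simpa using Complex.normSq_eq_zero.mp h2

/-- Let `M ⊂ M_m(ℂ)` be a unital *-subalgebra and `B : K → ℂ^m` a
coisometry (`BB* = id`) for a finite-dimensional Hilbert space `K = ℂ^k`, so that
`MB = {yB : y ∈ M}` is a subspace of the Hilbert–Schmidt operators from `K` to `ℂ^m`
(i.e. of `m × k` matrices). Let `E_M` be the trace-preserving conditional expectation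
onto `M`, characterized by `E_M(x) ∈ M` and `tr(E_M(x) y) = tr(x y)` for all `y ∈ M`.
Then the map `P(T) = E_M(TB*)B` is the orthogonal projection from `HS(K, ℂ^m)` onto
the subspace `MB`: each `P(T)` lies in `MB`, `P` fixes `MB`, and `T − P(T)` is
orthogonal to `MB` in the Hilbert–Schmidt inner product `⟨S, T⟩ = tr(S*T)`. -/
theorem condExp_comp_isometry_orthogonal_projection {m k : ℕ}
    (M : StarSubalgebra ℂ (Matrix (Fin m) (Fin m) ℂ))
    (E : Matrix (Fin m) (Fin m) ℂ →ₗ[ℂ] Matrix (Fin m) (Fin m) ℂ)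
    (hEmem : ∀ x, E x ∈ M)
    (hEtr : ∀ x, ∀ y ∈ M, ((E x) * y).trace = (x * y).trace)
    (B : Matrix (Fin m) (Fin k) ℂ)
    (hB : B * Bᴴ = 1) :
    (∀ T : Matrix (Fin m) (Fin k) ℂ, ∃ y ∈ M, E (T * Bᴴ) * B = y * B) ∧
    (∀ y ∈ M, E ((y * B) * Bᴴ) * B = y * B) ∧
    (∀ T : Matrix (Fin m) (Fin k) ℂ, ∀ y ∈ M,
      (((y * B)ᴴ) * (T - E (T * Bᴴ) * B)).trace = 0) := by
  have hfix : ∀ y ∈ M, E y = y := by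
    intro y hy
    have hd : E y - y ∈ M := sub_mem (hEmem y) hy
    have hdH : (E y - y)ᴴ ∈ M := star_mem hd
    have hz : ((E y - y) * (E y - y)ᴴ).trace = 0 := by
      have h1 := hEtr y ((E y - y)ᴴ) hdH
      rw [sub_mul, Matrix.trace_sub, h1, sub_self]
    exact sub_eq_zero.mp (trace_mul_conjTranspose_self_eq_zero' hz)
  refine ⟨fun T => ⟨E (T * Bᴴ), hEmem _, rfl⟩, fun y hy => ?_, fun T y hy => ?_⟩
  · rw [Matrix.mul_assoc y B Bᴴ, hB, mul_one, hfix y hy]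
  · have hyH : yᴴ ∈ M := star_mem hy
    have h1 : ((y * B)ᴴ * (E (T * Bᴴ) * B)).trace = ((y * B)ᴴ * T).trace := by
      calc ((y * B)ᴴ * (E (T * Bᴴ) * B)).trace
          = (Bᴴ * (yᴴ * (E (T * Bᴴ) * B))).trace := by
            rw [Matrix.conjTranspose_mul, Matrix.mul_assoc]
        _ = (yᴴ * (E (T * Bᴴ) * (B * Bᴴ))).trace := by
            rw [Matrix.trace_mul_comm]
            simp only [Matrix.mul_assoc]
        _ = (E (T * Bᴴ) * yᴴ).trace := by
            rw [hB, Matrix.mul_one, Matrix.trace_mul_comm]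
        _ = (T * Bᴴ * yᴴ).trace := hEtr _ _ hyH
        _ = ((y * B)ᴴ * T).trace := by
            rw [Matrix.conjTranspose_mul, Matrix.mul_assoc, Matrix.trace_mul_comm,
              Matrix.mul_assoc]
    rw [Matrix.mul_sub, Matrix.trace_sub, h1, sub_self]
end

section
/- Under the assumptions of the comparison setting (M ⊂ M_m standard inclusion, U = Σ_i x_i⊗y_i unitary with x_i ∈ M′, y_i ∈ N, and B = Σ_i |x_i⟩⟨y_i*| satisfying BB* = id), for every density f ∈ N one has θ₁ ∘ θ_f = θ₁; equivalently, E_M(B f B*) = 1, i.e., tr(x B f B*) = tr(x) for all x ∈ M. -/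
open Matrix
open scoped BigOperators ComplexOrder TensorProduct

/-- The operator `B = Σ_i |x_i⟩⟨y_i*| : L₂(N) → L₂(M)`,
`B|a⟩ = Σ_i τ(y_i a)|x_i′⟩` (with `τ = tr/n` the normalized trace on `N`). -/
noncomputable def Bop {m n s : ℕ}
    (x' : Fin s → Matrix (Fin m) (Fin m) ℂ)
    (y : Fin s → Matrix (Fin n) (Fin n) ℂ)
    (a : Matrix (Fin n) (Fin n) ℂ) : Matrix (Fin m) (Fin m) ℂ :=
  ∑ i, ((y i * a).trace / (n : ℂ)) • x' i

/-- The adjoint `B* : L₂(M) → L₂(N)`, `B*|h⟩ = Σ_j tr(x_j′* h)|y_j*⟩`. -/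
noncomputable def Bstarop {m n s : ℕ}
    (x' : Fin s → Matrix (Fin m) (Fin m) ℂ)
    (y : Fin s → Matrix (Fin n) (Fin n) ℂ)
    (h : Matrix (Fin m) (Fin m) ℂ) : Matrix (Fin n) (Fin n) ℂ :=
  ∑ j, (((x' j)ᴴ * h).trace) • (y j)ᴴ

/-- In the comparison setting — `M ⊂ M_m(ℂ)` a standardly included
*-subalgebra acting on `L₂(M) = M` by left multiplication, `U = Σ_i x_i ⊗ y_i` a
unitary with `x_i ∈ M′` right multiplication by `x_i′ ∈ M` and `y_i ∈ N = M_n(ℂ)`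
acting on `L₂(N)` by left multiplication (hypothesis `hU`: `U*U = id`, expressed on
elementary tensors), and `B = Σ_i |x_i⟩⟨y_i*|` satisfying `BB* = id_{L₂(M)}`
(hypothesis `hB`) — for every density `f ∈ N` one has `θ₁ ∘ θ_f = θ₁`
(conclusion (1), on rank-one operators `|k⟩⟨h|` evaluated at vectors `z ∈ L₂(M)`,
where `c^g_{ij} = τ(y_i g y_j*)` are the coefficients of `θ_g`); equivalently
`E_M(BfB*) = 1` (conclusion (2): the conditional expectation `θ₁ = E_M` applied to
the operator `BfB*` on `L₂(M)` is the identity), i.e. `tr(x BfB*) = tr(x)`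
for all `x ∈ M`. -/
theorem theta_one_comp_theta_f {m n s : ℕ} [NeZero n]
    (M : StarSubalgebra ℂ (Matrix (Fin m) (Fin m) ℂ))
    (x' : Fin s → Matrix (Fin m) (Fin m) ℂ)
    (y : Fin s → Matrix (Fin n) (Fin n) ℂ)
    (hx : ∀ i, x' i ∈ M)
    (hB : ∀ h ∈ M,
      ∑ i, ∑ j, (((y i * (y j)ᴴ).trace / (n : ℂ)) * ((x' j)ᴴ * h).trace) • x' i = h)
    (hU : ∀ (h : Matrix (Fin m) (Fin m) ℂ) (a : Matrix (Fin n) (Fin n) ℂ),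
      ∑ i, ∑ j, (h * x' i * (x' j)ᴴ) ⊗ₜ[ℂ] ((y j)ᴴ * y i * a) = h ⊗ₜ[ℂ] a)
    (f : Matrix (Fin n) (Fin n) ℂ) (hf : f.PosSemidef) (htrf : f.trace = (n : ℂ)) :
    (∀ k ∈ M, ∀ h ∈ M, ∀ z ∈ M,
      ∑ i, ∑ j, ∑ a, ∑ b,
        (((y i * f * (y j)ᴴ).trace / (n : ℂ)) * ((y a * (y b)ᴴ).trace / (n : ℂ)) *
          ((h * x' j * x' b)ᴴ * z).trace) • (k * x' i * x' a)
        = ∑ a, ∑ b,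
            (((y a * (y b)ᴴ).trace / (n : ℂ)) * ((h * x' b)ᴴ * z).trace) • (k * x' a)) ∧
    (∀ z ∈ M,
      ∑ a, ∑ b, (((y a * (y b)ᴴ).trace / (n : ℂ)) •
          ((Bop x' y (f * Bstarop x' y (z * (x' b)ᴴ))) * x' a)) = z) := by
  have hn : (n : ℂ) ≠ 0 := Nat.cast_ne_zero.mpr (NeZero.ne n)
  have hxstar : ∀ i, (x' i)ᴴ ∈ M := fun i => by
    simpa [Matrix.star_eq_conjTranspose] using star_mem (hx i)
  -- BB* = 1 applied after left multiplication by p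
  have step1 : ∀ (p : Matrix (Fin m) (Fin m) ℂ), ∀ w ∈ M,
      ∑ a, ∑ b, (((y a * (y b)ᴴ).trace / (n : ℂ)) * ((x' b)ᴴ * w).trace) • (p * x' a)
        = p * w := by
    intro p w hw
    conv_rhs => rw [← hB w hw]
    rw [Finset.mul_sum]
    refine Finset.sum_congr rfl fun a _ => ?_
    rw [Finset.mul_sum]
    exact Finset.sum_congr rfl fun b _ => (mul_smul_comm _ _ _).symm
  -- key identity from hU : Σ c^f_{ij} x'_i x'_j^* = 1
  have K : ∑ i, ∑ j, ((y i * f * (y j)ᴴ).trace / (n : ℂ)) • (x' i * (x' j)ᴴ) = 1 := by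
    have h2 := congrArg (TensorProduct.lift (LinearMap.mk₂ ℂ
      (fun (w : Matrix (Fin m) (Fin m) ℂ) (g : Matrix (Fin n) (Fin n) ℂ) =>
        (g.trace / (n : ℂ)) • w)
      (fun w1 w2 g => smul_add _ _ _)
      (fun c w g => smul_comm _ _ _)
      (fun w g1 g2 => by simp [trace_add, add_div, add_smul])
      (fun c w g => by simp [trace_smul, smul_smul, mul_div_assoc]))) (hU 1 f)
    simp only [map_sum, TensorProduct.lift.tmul, LinearMap.mk₂_apply, one_mul] at h2
    rw [htrf, div_self hn, one_smul] at h2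
    rw [← h2]
    refine Finset.sum_congr rfl fun i _ => Finset.sum_congr rfl fun j _ => ?_
    congr 2
    rw [trace_mul_comm, ← mul_assoc]
  constructor
  · intro k hk h hh z hz
    have hg : hᴴ * z ∈ M := by
      refine mul_mem ?_ hz
      simpa [Matrix.star_eq_conjTranspose] using star_mem hh
    calc
      ∑ i, ∑ j, ∑ a, ∑ b,
          (((y i * f * (y j)ᴴ).trace / (n : ℂ)) * ((y a * (y b)ᴴ).trace / (n : ℂ)) *
            ((h * x' j * x' b)ᴴ * z).trace) • (k * x' i * x' a)
        = ∑ i, ∑ j, ((y i * f * (y j)ᴴ).trace / (n : ℂ)) •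
            ((k * x' i) * ((x' j)ᴴ * (hᴴ * z))) := by
          refine Finset.sum_congr rfl fun i _ => Finset.sum_congr rfl fun j _ => ?_
          rw [← step1 (k * x' i) ((x' j)ᴴ * (hᴴ * z)) (mul_mem (hxstar j) hg),
            Finset.smul_sum]
          refine Finset.sum_congr rfl fun a _ => ?_
          rw [Finset.smul_sum]
          refine Finset.sum_congr rfl fun b _ => ?_
          rw [smul_smul, mul_assoc]
          congr 3
          simp [conjTranspose_mul, mul_assoc]
      _ = k * ((∑ i, ∑ j, ((y i * f * (y j)ᴴ).trace / (n : ℂ)) • (x' i * (x' j)ᴴ))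
            * (hᴴ * z)) := by
          rw [Finset.sum_mul, Finset.mul_sum]
          refine Finset.sum_congr rfl fun i _ => ?_
          rw [Finset.sum_mul, Finset.mul_sum]
          refine Finset.sum_congr rfl fun j _ => ?_
          simp [smul_mul_assoc, mul_smul_comm, mul_assoc]
      _ = k * (hᴴ * z) := by rw [K, one_mul]
      _ = ∑ a, ∑ b, (((y a * (y b)ᴴ).trace / (n : ℂ)) * ((h * x' b)ᴴ * z).trace)
            • (k * x' a) := by
          rw [← step1 k (hᴴ * z) hg]
          refine Finset.sum_congr rfl fun a _ => Finset.sum_congr rfl fun b _ => ?_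
          congr 3
          simp [conjTranspose_mul, mul_assoc]
  · intro z hz
    have swap4 : ∀ (F : Fin s → Fin s → Fin s → Fin s → Matrix (Fin m) (Fin m) ℂ),
        ∑ a, ∑ b, ∑ i, ∑ j, F a b i j = ∑ i, ∑ j, ∑ a, ∑ b, F a b i j := by
      intro F
      calc ∑ a, ∑ b, ∑ i, ∑ j, F a b i j
          = ∑ a, ∑ i, ∑ b, ∑ j, F a b i j :=
            Finset.sum_congr rfl fun a _ => Finset.sum_comm
        _ = ∑ i, ∑ a, ∑ b, ∑ j, F a b i j := Finset.sum_comm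
        _ = ∑ i, ∑ a, ∑ j, ∑ b, F a b i j :=
            Finset.sum_congr rfl fun i _ => Finset.sum_congr rfl fun a _ =>
              Finset.sum_comm
        _ = ∑ i, ∑ j, ∑ a, ∑ b, F a b i j :=
            Finset.sum_congr rfl fun i _ => Finset.sum_comm
    calc
      ∑ a, ∑ b, (((y a * (y b)ᴴ).trace / (n : ℂ)) •
          ((Bop x' y (f * Bstarop x' y (z * (x' b)ᴴ))) * x' a))
        = ∑ a, ∑ b, ∑ i, ∑ j,
            (((y i * f * (y j)ᴴ).trace / (n : ℂ)) *
              (((y a * (y b)ᴴ).trace / (n : ℂ)) *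
                ((x' b)ᴴ * ((x' j)ᴴ * z)).trace)) • (x' i * x' a) := by
          refine Finset.sum_congr rfl fun a _ => Finset.sum_congr rfl fun b _ => ?_
          rw [Bop, Bstarop, Finset.mul_sum]
          simp only [mul_smul_comm, Finset.mul_sum, trace_sum, trace_smul, smul_eq_mul,
            Finset.sum_div, Finset.sum_smul, smul_smul, Finset.sum_mul, smul_mul_assoc,
            Finset.smul_sum]
          refine Finset.sum_congr rfl fun i _ => Finset.sum_congr rfl fun j _ => ?_
          congr 1
          rw [show ((x' j)ᴴ * (z * (x' b)ᴴ)).trace = ((x' b)ᴴ * ((x' j)ᴴ * z)).trace by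
            rw [← mul_assoc, trace_mul_comm]]
          rw [← mul_assoc (y i) f ((y j)ᴴ)]
          ring
      _ = ∑ i, ∑ j, ((y i * f * (y j)ᴴ).trace / (n : ℂ)) •
            ((x' i) * ((x' j)ᴴ * z)) := by
          rw [swap4]
          refine Finset.sum_congr rfl fun i _ => Finset.sum_congr rfl fun j _ => ?_
          rw [← step1 (x' i) ((x' j)ᴴ * z) (mul_mem (hxstar j) hz), Finset.smul_sum]
          refine Finset.sum_congr rfl fun a _ => ?_
          rw [Finset.smul_sum]
          refine Finset.sum_congr rfl fun b _ => ?_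
          rw [smul_smul]
      _ = (∑ i, ∑ j, ((y i * f * (y j)ᴴ).trace / (n : ℂ)) • (x' i * (x' j)ᴴ)) * z := by
          rw [Finset.sum_mul]
          refine Finset.sum_congr rfl fun i _ => ?_
          rw [Finset.sum_mul]
          refine Finset.sum_congr rfl fun j _ => ?_
          simp [smul_mul_assoc, mul_assoc]
      _ = z := by rw [K, one_mul]
end
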